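/- Let r = p/q and r̃ = p̃/q̃ be rational functions in R_{m,n} with r nondegenerate, and with unit-norm coefficient vectors x(r), x(r̃) chosen with optimal relative phase so that ‖x(r)-x(r̃)‖ = d(r,r̃). Then for all z in the closed unit disk, χ(r(z), r̃(z)) ≤ √(2(m+n+1))·κ(S)·d(r,r̃), where S = S(q,-p). -/

import Mathlib

noncomputable section
open Matrix Finset Polynomial

/-- Spectral (operator `ℓ² → ℓ²`) norm of a complex matrix. -/
def specNorm {α β : Type} [Fintype α] [Fintype β] [DecidableEq α] [DecidableEq β]
    (A : Matrix α β ℂ) : ℝ :=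
  ‖(Matrix.toEuclideanLin A).toContinuousLinearMap‖

/-- Moore–Penrose pseudoinverse `A† = Aᴴ (A Aᴴ)⁻¹` of a full row rank matrix. -/
def pinv {α β : Type} [Fintype α] [Fintype β] [DecidableEq α] [DecidableEq β]
    (A : Matrix α β ℂ) : Matrix β α ℂ :=
  Aᴴ * (A * Aᴴ)⁻¹

/-- Sylvester-like matrix `S = S(q,-p)` of size `(m+n+1) × (m+n+2)`: for `0 ≤ k ≤ m` the
`(j,k)` entry is `q_{j-k}`, and for `0 ≤ k ≤ n` the `(j, m+1+k)` entry is `-p_{j-k}`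
(coefficients out of range being `0`). -/
def sylv (m n : ℕ) (p q : Polynomial ℂ) : Matrix (Fin (m + n + 1)) (Fin (m + n + 2)) ℂ :=
  fun j k =>
    if (k : ℕ) ≤ m then
      (if (k : ℕ) ≤ (j : ℕ) then q.coeff ((j : ℕ) - (k : ℕ)) else 0)
    else
      (if (k : ℕ) - (m + 1) ≤ (j : ℕ) then -p.coeff ((j : ℕ) - ((k : ℕ) - (m + 1))) else 0)

/-- Spectral condition number `κ(S) = ‖S‖·‖S†‖` of the Sylvester-like matrix. -/
def condS (m n : ℕ) (p q : Polynomial ℂ) : ℝ :=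
  specNorm (sylv m n p q) * specNorm (pinv (sylv m n p q))

/-- Squared Euclidean norm of the stacked coefficient vector of `p/q ∈ R_{m,n}`. -/
def coeffNorm2 (m n : ℕ) (p q : Polynomial ℂ) : ℝ :=
  (∑ j ∈ Finset.range (m + 1), ‖p.coeff j‖ ^ 2)
    + (∑ j ∈ Finset.range (n + 1), ‖q.coeff j‖ ^ 2)

/-- Chordal distance `χ(a/b, c/d)` between two points of the Riemann sphere given in
homogeneous coordinates: `|a d - c b| / (√(|a|²+|b|²) √(|c|²+|d|²))`. -/
def chord (a b c d : ℂ) : ℝ :=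
  ‖a * d - c * b‖ /
    (Real.sqrt (‖a‖ ^ 2 + ‖b‖ ^ 2) *
      Real.sqrt (‖c‖ ^ 2 + ‖d‖ ^ 2))

/-- Distance of the stacked coefficient vectors of `p/q` and of `a·(p̃/q̃)` (viewed in
`R_{m,n}`, i.e. in `ℂ^{m+n+2}`). -/
def coeffDist (m n : ℕ) (p q pt qt : Polynomial ℂ) (a : ℂ) : ℝ :=
  Real.sqrt ((∑ j ∈ Finset.range (m + 1), ‖p.coeff j - a * pt.coeff j‖ ^ 2)
    + (∑ j ∈ Finset.range (n + 1), ‖q.coeff j - a * qt.coeff j‖ ^ 2))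

open scoped ComplexOrder

lemma sq_abs_eval_le (f : Polynomial ℂ) (k : ℕ) (hf : f.natDegree ≤ k) (z : ℂ)
    (hz : ‖z‖ ≤ 1) :
    ‖f.eval z‖ ^ 2 ≤ (k + 1) * ∑ j ∈ Finset.range (k + 1), ‖f.coeff j‖ ^ 2 := by
  have h1 : f.eval z = ∑ j ∈ Finset.range (k + 1), f.coeff j * z ^ j :=
    eval_eq_sum_range' (Nat.lt_succ_of_le hf) z
  have h2 : ‖f.eval z‖ ≤ ∑ j ∈ Finset.range (k + 1), ‖f.coeff j‖ := by
    rw [h1]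
    refine (norm_sum_le _ _).trans (Finset.sum_le_sum fun j _ => ?_)
    rw [norm_mul, norm_pow]
    calc ‖f.coeff j‖ * ‖z‖ ^ j
        ≤ ‖f.coeff j‖ * 1 := by
          gcongr
          exact pow_le_one₀ (norm_nonneg z) hz
      _ = _ := mul_one _
  calc ‖f.eval z‖ ^ 2 ≤ (∑ j ∈ Finset.range (k + 1), ‖f.coeff j‖) ^ 2 := by
        gcongr
    _ ≤ _ := by
        have := sq_sum_le_card_mul_sum_sq (s := Finset.range (k + 1))
          (f := fun j => ‖f.coeff j‖)
        simpa using this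

lemma exists_rep (m n : ℕ) (p q : Polynomial ℂ) (hp : p.natDegree ≤ m) (hq : q.natDegree ≤ n)
    (hco : IsCoprime p q) (hlead : p.coeff m ≠ 0 ∨ q.coeff n ≠ 0)
    (f : Polynomial ℂ) (hf : f.natDegree ≤ m + n) :
    ∃ a b : Polynomial ℂ, a.natDegree ≤ m ∧ b.natDegree ≤ n ∧ a * q - b * p = f := by
  obtain ⟨u, v, huv⟩ := hco
  set a' : Polynomial ℂ := f * v with ha'
  set b' : Polynomial ℂ := -(f * u) with hb'
  have hrep : a' * q - b' * p = f := by
    rw [ha', hb']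
    calc f * v * q - -(f * u) * p = f * (u * p + v * q) := by ring
      _ = f := by rw [huv, mul_one]
  rcases hlead with hple | hqle
  · -- p has exact degree m
    have hp0 : p ≠ 0 := fun h => hple (by simp [h])
    have hpdeg : p.natDegree = m := le_antisymm hp (le_natDegree_of_ne_zero hple)
    set p1 : Polynomial ℂ := p * C p.leadingCoeff⁻¹ with hp1
    have hmonic : p1.Monic := monic_mul_leadingCoeff_inv hp0
    set t : Polynomial ℂ := (a' /ₘ p1) * C p.leadingCoeff⁻¹ with ht
    set a : Polynomial ℂ := a' %ₘ p1 with ha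
    set b : Polynomial ℂ := b' - t * q with hb
    have h2 := modByMonic_add_div a' p1
    have hsplit : a' = t * p + a := by
      rw [ht, ha]
      linear_combination -h2 + (a' /ₘ p1) * hp1
    have hfab : a * q - b * p = f := by
      rw [hb]
      linear_combination hrep - q * hsplit
    have hadeg : a.natDegree ≤ m := by
      have h3 : a.degree < p1.degree := degree_modByMonic_lt a' hmonic
      rw [hp1, degree_mul_leadingCoeff_inv p hp0] at h3
      refine natDegree_le_iff_degree_le.mpr (le_of_lt (lt_of_lt_of_le h3 ?_))
      exact natDegree_le_iff_degree_le.mp hp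
    refine ⟨a, b, hadeg, ?_, hfab⟩
    by_cases hb0 : b = 0
    · simp [hb0]
    · have hbp : b * p = a * q - f := by linear_combination -hfab
      have h4 : (b * p).natDegree ≤ m + n := by
        rw [hbp]
        refine (natDegree_sub_le _ _).trans (max_le ?_ hf)
        exact natDegree_mul_le.trans (add_le_add hadeg hq)
      rw [natDegree_mul hb0 hp0, hpdeg] at h4
      omega
  · -- q has exact degree n
    have hq0 : q ≠ 0 := fun h => hqle (by simp [h])
    have hqdeg : q.natDegree = n := le_antisymm hq (le_natDegree_of_ne_zero hqle)
    set q1 : Polynomial ℂ := q * C q.leadingCoeff⁻¹ with hq1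
    have hmonic : q1.Monic := monic_mul_leadingCoeff_inv hq0
    set t : Polynomial ℂ := (b' /ₘ q1) * C q.leadingCoeff⁻¹ with ht
    set b : Polynomial ℂ := b' %ₘ q1 with hbdef
    set a : Polynomial ℂ := a' - t * p with hadef
    have h2 := modByMonic_add_div b' q1
    have hsplit : b' = t * q + b := by
      rw [ht, hbdef]
      linear_combination -h2 + (b' /ₘ q1) * hq1
    have hfab : a * q - b * p = f := by
      rw [hadef]
      linear_combination hrep + p * hsplit
    have hbdeg : b.natDegree ≤ n := by
      have h3 : b.degree < q1.degree := degree_modByMonic_lt b' hmonic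
      rw [hq1, degree_mul_leadingCoeff_inv q hq0] at h3
      refine natDegree_le_iff_degree_le.mpr (le_of_lt (lt_of_lt_of_le h3 ?_))
      exact natDegree_le_iff_degree_le.mp hq
    refine ⟨a, b, ?_, hbdeg, hfab⟩
    by_cases ha0 : a = 0
    · simp [ha0]
    · have hap : a * q = f + b * p := by linear_combination hfab
      have h4 : (a * q).natDegree ≤ m + n := by
        rw [hap]
        refine (natDegree_add_le _ _).trans (max_le hf ?_)
        exact natDegree_mul_le.trans (by omega)
      rw [natDegree_mul ha0 hq0, hqdeg] at h4
      omega

lemma coeff_mul_as_sum (a q : Polynomial ℂ) (M j N : ℕ) (ha : a.natDegree ≤ M) (hN : M < N) :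
    (a * q).coeff j =
      ∑ i ∈ Finset.range N, (if i ≤ j then q.coeff (j - i) else 0) * a.coeff i := by
  rw [coeff_mul, Finset.Nat.sum_antidiagonal_eq_sum_range_succ_mk]
  have h1 : ∑ i ∈ Finset.range N, (if i ≤ j then q.coeff (j - i) else 0) * a.coeff i
      = ∑ i ∈ Finset.range N, (if i ≤ j then a.coeff i * q.coeff (j - i) else 0) := by
    refine Finset.sum_congr rfl fun i _ => ?_
    split <;> ring
  rw [h1, ← Finset.sum_filter]
  have h2 : Finset.filter (fun i => i ≤ j) (Finset.range N) = Finset.range (min N (j + 1)) := by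
    ext i
    simp only [Finset.mem_filter, Finset.mem_range, lt_min_iff]
    omega
  rw [h2]
  refine (Finset.sum_subset (Finset.range_subset_range.mpr (min_le_right _ _)) fun i hi hni => ?_).symm
  rw [Finset.mem_range] at hi
  rw [Finset.mem_range, lt_min_iff, not_and_or] at hni
  have : M < i := by omega
  rw [coeff_eq_zero_of_natDegree_lt (lt_of_le_of_lt ha this), zero_mul]

lemma mulVec_sylv (m n : ℕ) (p q : Polynomial ℂ) (a b : Polynomial ℂ)
    (ha : a.natDegree ≤ m) (hb : b.natDegree ≤ n) (j : Fin (m + n + 1)) :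
    (sylv m n p q).mulVec
      (fun k => if (k : ℕ) ≤ m then a.coeff (k : ℕ) else b.coeff ((k : ℕ) - (m + 1))) j
      = (a * q - b * p).coeff (j : ℕ) := by
  set f : ℕ → ℂ := fun i =>
    if i ≤ m then (if i ≤ (j : ℕ) then q.coeff ((j : ℕ) - i) else 0) * a.coeff i
    else (if i - (m + 1) ≤ (j : ℕ) then -p.coeff ((j : ℕ) - (i - (m + 1))) else 0) *
      b.coeff (i - (m + 1)) with hf
  have hmv : (sylv m n p q).mulVec
      (fun k => if (k : ℕ) ≤ m then a.coeff (k : ℕ) else b.coeff ((k : ℕ) - (m + 1))) j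
      = ∑ k : Fin (m + n + 2), f (k : ℕ) := by
    rw [Matrix.mulVec, dotProduct]
    refine Finset.sum_congr rfl fun k _ => ?_
    by_cases h : (k : ℕ) ≤ m <;> simp [sylv, hf, h]
  rw [hmv, Fin.sum_univ_eq_sum_range f (m + n + 2)]
  have hsplit : (m + n + 2) = (m + 1) + (n + 1) := by omega
  rw [hsplit, Finset.sum_range_add]
  have e1 : ∑ i ∈ Finset.range (m + 1), f i = (a * q).coeff (j : ℕ) := by
    rw [coeff_mul_as_sum a q m (j : ℕ) (m + 1) ha (by omega)]
    refine Finset.sum_congr rfl fun i hi => ?_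
    rw [Finset.mem_range] at hi
    simp only [hf]
    rw [if_pos (by omega)]
  have e2 : ∑ i ∈ Finset.range (n + 1), f (m + 1 + i) = -(b * p).coeff (j : ℕ) := by
    rw [coeff_mul_as_sum b p n (j : ℕ) (n + 1) hb (by omega), ← Finset.sum_neg_distrib]
    refine Finset.sum_congr rfl fun i hi => ?_
    simp only [hf]
    rw [if_neg (by omega)]
    have : m + 1 + i - (m + 1) = i := by omega
    rw [this]
    split <;> ring
  rw [e1, e2, coeff_sub]
  ring

lemma sylv_mulVec_surjective (m n : ℕ) (p q : Polynomial ℂ)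
    (hp : p.natDegree ≤ m) (hq : q.natDegree ≤ n)
    (hco : IsCoprime p q) (hlead : p.coeff m ≠ 0 ∨ q.coeff n ≠ 0) :
    Function.Surjective (sylv m n p q).mulVec := by
  intro y
  set f : Polynomial ℂ := ∑ j : Fin (m + n + 1), C (y j) * X ^ (j : ℕ) with hfdef
  have hfd : f.natDegree ≤ m + n := by
    refine natDegree_sum_le_of_forall_le _ _ fun j _ => ?_
    exact (natDegree_C_mul_X_pow_le _ _).trans (by omega)
  have hfc : ∀ j : Fin (m + n + 1), f.coeff (j : ℕ) = y j := by
    intro j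
    rw [hfdef, finset_sum_coeff]
    rw [Finset.sum_eq_single j]
    · simp
    · intro i _ hij
      rw [coeff_C_mul, coeff_X_pow, if_neg (fun h => hij (Fin.ext (by omega))), mul_zero]
    · intro h
      exact absurd (Finset.mem_univ j) h
  obtain ⟨a, b, ha, hb, hab⟩ := exists_rep m n p q hp hq hco hlead f hfd
  refine ⟨fun k => if (k : ℕ) ≤ m then a.coeff (k : ℕ) else b.coeff ((k : ℕ) - (m + 1)), ?_⟩
  funext j
  rw [mulVec_sylv m n p q a b ha hb j, hab, hfc]

lemma sylv_isUnit (m n : ℕ) (p q : Polynomial ℂ)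
    (hp : p.natDegree ≤ m) (hq : q.natDegree ≤ n)
    (hco : IsCoprime p q) (hlead : p.coeff m ≠ 0 ∨ q.coeff n ≠ 0) :
    IsUnit (sylv m n p q * (sylv m n p q)ᴴ) := by
  set A := sylv m n p q with hA
  rw [← Matrix.mulVec_injective_iff_isUnit]
  have hker : ∀ x, (A * Aᴴ).mulVec x = 0 → x = 0 := by
    intro x hx
    have h1 : Aᴴ.mulVec x = 0 := by
      have h2 : star x ⬝ᵥ ((A * Aᴴ).mulVec x) = star (Aᴴ.mulVec x) ⬝ᵥ (Aᴴ.mulVec x) := by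
        rw [← Matrix.mulVec_mulVec, dotProduct_mulVec, Matrix.star_mulVec,
          Matrix.conjTranspose_conjTranspose]
      rw [hx, dotProduct_zero] at h2
      exact dotProduct_star_self_eq_zero.mp h2.symm
    obtain ⟨w, hw⟩ := sylv_mulVec_surjective m n p q hp hq hco hlead x
    have h4 : star x ᵥ* A = 0 := by
      have h5 := Matrix.star_mulVec Aᴴ x
      rw [h1, Matrix.conjTranspose_conjTranspose] at h5
      simpa using h5.symm
    have h3 : star x ⬝ᵥ x = 0 := by
      calc star x ⬝ᵥ x = star x ⬝ᵥ (A *ᵥ w) := by rw [hA, hw]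
        _ = (star x ᵥ* A) ⬝ᵥ w := dotProduct_mulVec _ _ _
        _ = 0 := by rw [h4, zero_dotProduct]
    exact dotProduct_star_self_eq_zero.mp h3
  have : Function.Injective ((A * Aᴴ).mulVecLin) := by
    rw [← LinearMap.ker_eq_bot, LinearMap.ker_eq_bot']
    intro x hx
    exact hker x hx
  exact this

lemma shifted_sum (r : Polynomial ℂ) (k N : ℕ) (h : r.natDegree < N - k) (hkN : k ≤ N) (z : ℂ) :
    ∑ j ∈ Finset.range N, (if k ≤ j then r.coeff (j - k) else 0) * z ^ j
      = z ^ k * r.eval z := by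
  have hsplit : N = k + (N - k) := by omega
  rw [hsplit, Finset.sum_range_add]
  have e1 : ∑ j ∈ Finset.range k, (if k ≤ j then r.coeff (j - k) else 0) * z ^ j = 0 := by
    refine Finset.sum_eq_zero fun j hj => ?_
    rw [Finset.mem_range] at hj
    rw [if_neg (by omega), zero_mul]
  have e2 : ∑ i ∈ Finset.range (N - k), (if k ≤ k + i then r.coeff (k + i - k) else 0) * z ^ (k + i)
      = z ^ k * r.eval z := by
    rw [eval_eq_sum_range' (n := N - k) (by omega) z, Finset.mul_sum]
    refine Finset.sum_congr rfl fun i _ => ?_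
    rw [if_pos (by omega)]
    have : k + i - k = i := by omega
    rw [this, pow_add]
    ring
  rw [e1, e2]
  rw [zero_add]

lemma sylv_col_sum (m n : ℕ) (p q : Polynomial ℂ) (hp : p.natDegree ≤ m) (hq : q.natDegree ≤ n)
    (z : ℂ) (k : Fin (m + n + 2)) :
    ∑ j : Fin (m + n + 1), sylv m n p q j k * z ^ (j : ℕ)
      = if (k : ℕ) ≤ m then z ^ (k : ℕ) * q.eval z
        else -(z ^ ((k : ℕ) - (m + 1)) * p.eval z) := by
  by_cases hk : (k : ℕ) ≤ m
  · rw [if_pos hk]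
    have e : ∀ j : Fin (m + n + 1), sylv m n p q j k * z ^ (j : ℕ)
        = (fun i : ℕ => (if (k : ℕ) ≤ i then q.coeff (i - (k : ℕ)) else 0) * z ^ i) (j : ℕ) := by
      intro j; simp [sylv, hk]
    rw [Finset.sum_congr rfl fun j _ => e j, Fin.sum_univ_eq_sum_range
      (fun i : ℕ => (if (k : ℕ) ≤ i then q.coeff (i - (k : ℕ)) else 0) * z ^ i) (m + n + 1)]
    exact shifted_sum q (k : ℕ) (m + n + 1) (by omega) (by omega) z
  · rw [if_neg hk]
    have hk2 : (k : ℕ) - (m + 1) ≤ n := by have := k.isLt; omega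
    have e : ∀ j : Fin (m + n + 1), sylv m n p q j k * z ^ (j : ℕ)
        = (fun i : ℕ => (if (k : ℕ) - (m + 1) ≤ i then (-p).coeff (i - ((k : ℕ) - (m + 1))) else 0)
            * z ^ i) (j : ℕ) := by
      intro j; simp [sylv, hk]
    rw [Finset.sum_congr rfl fun j _ => e j, Fin.sum_univ_eq_sum_range
      (fun i : ℕ => (if (k : ℕ) - (m + 1) ≤ i then (-p).coeff (i - ((k : ℕ) - (m + 1))) else 0)
        * z ^ i) (m + n + 1),
      shifted_sum (-p) ((k : ℕ) - (m + 1)) (m + n + 1) (by rw [natDegree_neg]; omega) (by omega) z,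
      eval_neg]
    ring

open scoped Matrix.Norms.L2Operator in
lemma specNorm_eq {α β : Type} [Fintype α] [Fintype β] [DecidableEq α] [DecidableEq β]
    (A : Matrix α β ℂ) : specNorm A = ‖A‖ := rfl

set_option maxHeartbeats 1000000 in
open scoped Matrix.Norms.L2Operator in
lemma one_le_pinv_norm (m n : ℕ) (p q : Polynomial ℂ)
    (hp : p.natDegree ≤ m) (hq : q.natDegree ≤ n)
    (hco : IsCoprime p q) (hlead : p.coeff m ≠ 0 ∨ q.coeff n ≠ 0) (z : ℂ) :
    1 ≤ specNorm (pinv (sylv m n p q)) *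
      Real.sqrt (‖p.eval z‖ ^ 2 + ‖q.eval z‖ ^ 2) := by
  set S := sylv m n p q with hS
  have hU : IsUnit (S * Sᴴ) := sylv_isUnit m n p q hp hq hco hlead
  have hSpinv : S * pinv S = 1 := by
    rw [pinv, ← Matrix.mul_assoc]
    exact Matrix.mul_nonsing_inv _ ((Matrix.isUnit_iff_isUnit_det _).mp hU)
  set y : EuclideanSpace ℂ (Fin (m + n + 1)) :=
    WithLp.toLp 2 (fun j => (starRingEnd ℂ) z ^ (j : ℕ)) with hy
  set w : EuclideanSpace ℂ (Fin (m + n + 2)) :=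
    (EuclideanSpace.equiv _ ℂ).symm (Sᴴ *ᵥ y) with hw
  -- y is recovered from w
  have hrec : (pinv S)ᴴ *ᵥ (w : Fin (m + n + 2) → ℂ) = y := by
    show (pinv S)ᴴ *ᵥ (Sᴴ *ᵥ y) = y
    rw [Matrix.mulVec_mulVec, ← Matrix.conjTranspose_mul, hSpinv, Matrix.conjTranspose_one,
      Matrix.one_mulVec]
  have h1 : ‖y‖ ≤ ‖(pinv S)ᴴ‖ * ‖w‖ := by
    have := Matrix.l2_opNorm_mulVec (pinv S)ᴴ w
    rw [show (EuclideanSpace.equiv _ ℂ).symm ((pinv S)ᴴ *ᵥ w) = y from congrArg _ hrec] at this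
    exact this
  -- compute entries of w
  have hwk : ∀ k : Fin (m + n + 2), ‖w k‖
      = if (k : ℕ) ≤ m then ‖z‖ ^ (k : ℕ) * ‖q.eval z‖
        else ‖z‖ ^ ((k : ℕ) - (m + 1)) * ‖p.eval z‖ := by
    intro k
    have e1 : w k = (starRingEnd ℂ) (∑ j : Fin (m + n + 1), S j k * z ^ (j : ℕ)) := by
      show (Sᴴ *ᵥ y) k = _
      rw [Matrix.mulVec, dotProduct, map_sum]
      refine Finset.sum_congr rfl fun j _ => ?_
      simp [Matrix.conjTranspose_apply, hy, Complex.star_def, mul_comm]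
    rw [e1, Complex.norm_conj, hS, sylv_col_sum m n p q hp hq z k]
    by_cases hk : (k : ℕ) ≤ m <;> simp [hk, norm_mul, norm_pow]
  -- squared norm of w
  set T : ℕ → ℝ := fun N => ∑ i ∈ Finset.range N, (‖z‖ ^ 2) ^ i with hT
  have hTnonneg : ∀ N, 0 ≤ T N := fun N => Finset.sum_nonneg fun i _ => by positivity
  have hTmono : ∀ N N', N ≤ N' → T N ≤ T N' := by
    intro N N' hNN
    exact Finset.sum_le_sum_of_subset_of_nonneg (Finset.range_subset_range.mpr hNN)
      (fun i _ _ => by positivity)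
  set N2 : ℝ := ‖p.eval z‖ ^ 2 + ‖q.eval z‖ ^ 2 with hN2
  have hN2nonneg : 0 ≤ N2 := by positivity
  have hynorm : ‖y‖ ^ 2 = T (m + n + 1) := by
    rw [EuclideanSpace.norm_eq, Real.sq_sqrt (Finset.sum_nonneg fun i _ => by positivity)]
    simp only [hT]
    rw [← Fin.sum_univ_eq_sum_range (fun i : ℕ => (‖z‖ ^ 2) ^ i) (m + n + 1)]
    refine Finset.sum_congr rfl fun j _ => ?_
    rw [hy]
    simp only [norm_pow, Complex.norm_conj]
    ring
  have hwnorm : ‖w‖ ^ 2 ≤ N2 * ‖y‖ ^ 2 := by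
    have e2 : ‖w‖ ^ 2 = ∑ k : Fin (m + n + 2), ‖w k‖ ^ 2 := by
      rw [EuclideanSpace.norm_eq, Real.sq_sqrt (Finset.sum_nonneg fun i _ => by positivity)]
    rw [e2]
    set g : ℕ → ℝ := fun i =>
        if i ≤ m then (‖z‖ ^ 2) ^ i * ‖q.eval z‖ ^ 2
        else (‖z‖ ^ 2) ^ (i - (m + 1)) * ‖p.eval z‖ ^ 2 with hg
    have e3 : ∑ k : Fin (m + n + 2), ‖w k‖ ^ 2
        = ∑ i ∈ Finset.range (m + n + 2), g i := by
      rw [← Fin.sum_univ_eq_sum_range g]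
      refine Finset.sum_congr rfl fun k _ => ?_
      rw [hwk k]
      simp only [hg]
      by_cases hk : (k : ℕ) ≤ m <;> simp only [hk, if_true, if_false, reduceIte] <;>
        rw [mul_pow] <;> ring
    rw [e3, show m + n + 2 = (m + 1) + (n + 1) by omega, Finset.sum_range_add]
    have e4 : ∑ i ∈ Finset.range (m + 1), g i
        = ‖q.eval z‖ ^ 2 * T (m + 1) := by
      simp only [hT, Finset.mul_sum]
      refine Finset.sum_congr rfl fun i hi => ?_
      rw [Finset.mem_range] at hi
      simp only [hg]
      rw [if_pos (by omega)]; ring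
    have e5 : ∑ i ∈ Finset.range (n + 1), g (m + 1 + i)
        = ‖p.eval z‖ ^ 2 * T (n + 1) := by
      simp only [hT, Finset.mul_sum]
      refine Finset.sum_congr rfl fun i hi => ?_
      simp only [hg]
      rw [if_neg (by omega), show m + 1 + i - (m + 1) = i by omega]; ring
    rw [e4, e5, hynorm, hN2]
    have b1 := hTmono (m + 1) (m + n + 1) (by omega)
    have b2 := hTmono (n + 1) (m + n + 1) (by omega)
    nlinarith [sq_nonneg (‖p.eval z‖), sq_nonneg (‖q.eval z‖),
      hTnonneg (m + n + 1)]
  have hy1 : 1 ≤ ‖y‖ := by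
    have : (1 : ℝ) ≤ T (m + n + 1) := by
      rw [hT]
      have := Finset.single_le_sum (f := fun i : ℕ => (‖z‖ ^ 2) ^ i)
        (fun i _ => by positivity) (Finset.mem_range.mpr (show 0 < m + n + 1 by omega))
      simpa using this
    nlinarith [norm_nonneg y]
  have hwy : ‖w‖ ≤ Real.sqrt N2 * ‖y‖ := by
    have h6 : ‖w‖ ^ 2 ≤ (Real.sqrt N2 * ‖y‖) ^ 2 := by
      rw [mul_pow, Real.sq_sqrt hN2nonneg]
      exact hwnorm
    have h7 := Real.sqrt_le_sqrt h6
    rwa [Real.sqrt_sq (norm_nonneg _),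
      Real.sqrt_sq (mul_nonneg (Real.sqrt_nonneg _) (norm_nonneg _))] at h7
  have hfinal : ‖y‖ ≤ (specNorm (pinv S) * Real.sqrt N2) * ‖y‖ := by
    calc ‖y‖ ≤ ‖(pinv S)ᴴ‖ * ‖w‖ := h1
      _ = ‖pinv S‖ * ‖w‖ := by rw [Matrix.l2_opNorm_conjTranspose]
      _ ≤ ‖pinv S‖ * (Real.sqrt N2 * ‖y‖) := by
          exact mul_le_mul_of_nonneg_left hwy (norm_nonneg _)
      _ = (specNorm (pinv S) * Real.sqrt N2) * ‖y‖ := by rw [specNorm_eq]; ring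
  nlinarith [hy1, hfinal]

open scoped Matrix.Norms.L2Operator in
lemma one_le_sqrt2_specNorm (m n : ℕ) (p q : Polynomial ℂ)
    (hp : p.natDegree ≤ m) (hq : q.natDegree ≤ n) (hnorm : coeffNorm2 m n p q = 1) :
    1 ≤ Real.sqrt 2 * specNorm (sylv m n p q) := by
  set S := sylv m n p q with hS
  have hcol : ∀ k0 : Fin (m + n + 2),
      Real.sqrt (∑ j : Fin (m + n + 1), ‖S j k0‖ ^ 2) ≤ specNorm S := by
    intro k0
    have h1 := Matrix.l2_opNorm_mulVec S (EuclideanSpace.single k0 (1 : ℂ))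
    rw [EuclideanSpace.norm_single, norm_one, mul_one] at h1
    rw [specNorm_eq]
    refine le_trans (le_of_eq ?_) h1
    rw [EuclideanSpace.norm_eq]
    congr 1
    refine Finset.sum_congr rfl fun j _ => ?_
    have e : (S *ᵥ (EuclideanSpace.single k0 (1 : ℂ))) j = S j k0 := by
      have : ((EuclideanSpace.single k0 (1 : ℂ)) : Fin (m + n + 2) → ℂ)
          = Pi.single k0 (1 : ℂ) := by
        funext i
        rw [EuclideanSpace.single_apply, Pi.single_apply]
      rw [this, Matrix.mulVec_single]
      simp
    rw [show ((EuclideanSpace.equiv _ ℂ).symm (S *ᵥ EuclideanSpace.single k0 1)) j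
        = (S *ᵥ (EuclideanSpace.single k0 (1 : ℂ))) j from rfl, e]
  have hQ : ∑ j : Fin (m + n + 1), ‖S (j : Fin (m + n + 1)) (⟨0, by omega⟩ : Fin (m + n + 2))‖ ^ 2
      = ∑ j ∈ Finset.range (n + 1), ‖q.coeff j‖ ^ 2 := by
    have e1 : ∀ j : Fin (m + n + 1), ‖S j (⟨0, by omega⟩ : Fin (m + n + 2))‖ ^ 2
        = (fun i : ℕ => ‖q.coeff i‖ ^ 2) (j : ℕ) := by
      intro j; simp [hS, sylv]
    rw [Finset.sum_congr rfl fun j _ => e1 j,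
      Fin.sum_univ_eq_sum_range (fun i : ℕ => ‖q.coeff i‖ ^ 2) (m + n + 1)]
    refine (Finset.sum_subset (Finset.range_subset_range.mpr (by omega)) fun i hi hni => ?_).symm
    rw [Finset.mem_range] at hi; rw [Finset.mem_range] at hni
    rw [coeff_eq_zero_of_natDegree_lt (by omega)]
    simp
  have hP : ∑ j : Fin (m + n + 1), ‖S (j : Fin (m + n + 1)) (⟨m + 1, by omega⟩ : Fin (m + n + 2))‖ ^ 2
      = ∑ j ∈ Finset.range (m + 1), ‖p.coeff j‖ ^ 2 := by
    have e1 : ∀ j : Fin (m + n + 1), ‖S j (⟨m + 1, by omega⟩ : Fin (m + n + 2))‖ ^ 2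
        = (fun i : ℕ => ‖p.coeff i‖ ^ 2) (j : ℕ) := by
      intro j; simp [hS, sylv]
    rw [Finset.sum_congr rfl fun j _ => e1 j,
      Fin.sum_univ_eq_sum_range (fun i : ℕ => ‖p.coeff i‖ ^ 2) (m + n + 1)]
    refine (Finset.sum_subset (Finset.range_subset_range.mpr (by omega)) fun i hi hni => ?_).symm
    rw [Finset.mem_range] at hi; rw [Finset.mem_range] at hni
    rw [coeff_eq_zero_of_natDegree_lt (by omega)]
    simp
  have hq1 := hcol ⟨0, by omega⟩
  have hp1 := hcol ⟨m + 1, by omega⟩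
  rw [hQ] at hq1
  rw [hP] at hp1
  set P2 := ∑ j ∈ Finset.range (m + 1), ‖p.coeff j‖ ^ 2 with hP2
  set Q2 := ∑ j ∈ Finset.range (n + 1), ‖q.coeff j‖ ^ 2 with hQ2
  have hP2nn : 0 ≤ P2 := Finset.sum_nonneg fun i _ => by positivity
  have hQ2nn : 0 ≤ Q2 := Finset.sum_nonneg fun i _ => by positivity
  have hsum : P2 + Q2 = 1 := hnorm
  have hPle : P2 ≤ specNorm S ^ 2 := by
    nlinarith [Real.sq_sqrt hP2nn, Real.sqrt_nonneg P2]
  have hQle : Q2 ≤ specNorm S ^ 2 := by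
    nlinarith [Real.sq_sqrt hQ2nn, Real.sqrt_nonneg Q2]
  have hs : 1 ≤ 2 * specNorm S ^ 2 := by linarith
  have hsn : 0 ≤ specNorm S := le_trans (Real.sqrt_nonneg _) hp1
  calc (1:ℝ) = Real.sqrt 1 := Real.sqrt_one.symm
    _ ≤ Real.sqrt (2 * specNorm S ^ 2) := Real.sqrt_le_sqrt hs
    _ = Real.sqrt 2 * specNorm S := by
        rw [Real.sqrt_mul (by norm_num : (0:ℝ) ≤ 2), Real.sqrt_sq hsn]

open scoped Matrix.Norms.L2Operator in
lemma specNorm_nonneg {α β : Type} [Fintype α] [Fintype β] [DecidableEq α] [DecidableEq β]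
    (A : Matrix α β ℂ) : 0 ≤ specNorm A := norm_nonneg _

set_option maxHeartbeats 2000000 in
/-- for `r = p/q` nondegenerate and `r̃ = p̃/q̃` in `R_{m,n}`, both with
unit-norm coefficient vectors in optimal relative phase, for all `|z| ≤ 1` one has
`χ(r(z), r̃(z)) ≤ √(2(m+n+1)) κ(S) d(r, r̃)`. -/
theorem chordal_le_coeff_distance (m n : ℕ) (p q pt qt : Polynomial ℂ)
    (hp : p.natDegree ≤ m) (hq : q.natDegree ≤ n)
    (hpt : pt.natDegree ≤ m) (hqt : qt.natDegree ≤ n)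
    (hco : IsCoprime p q) (hlead : p.coeff m ≠ 0 ∨ q.coeff n ≠ 0)
    (hnorm : coeffNorm2 m n p q = 1) (hnormt : coeffNorm2 m n pt qt = 1)
    (hopt : ∀ a : ℂ, ‖a‖ = 1 →
      coeffDist m n p q pt qt 1 ≤ coeffDist m n p q pt qt a)
    (z : ℂ) (hz : ‖z‖ ≤ 1) :
    chord (p.eval z) (q.eval z) (pt.eval z) (qt.eval z) ≤
      Real.sqrt (2 * (m + n + 1)) * condS m n p q * coeffDist m n p q pt qt 1 := by
  set d : ℝ := coeffDist m n p q pt qt 1 with hd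
  have hdnn : 0 ≤ d := Real.sqrt_nonneg _
  set P := p.eval z with hP
  set Q := q.eval z with hQ
  set Pt := pt.eval z with hPt
  set Qt := qt.eval z with hQt
  set N2 : ℝ := ‖P‖ ^ 2 + ‖Q‖ ^ 2 with hN2
  set Nt2 : ℝ := ‖Pt‖ ^ 2 + ‖Qt‖ ^ 2 with hNt2
  set D2 : ℝ := ‖P - Pt‖ ^ 2 + ‖Q - Qt‖ ^ 2 with hD2
  have hD2nn : 0 ≤ D2 := by positivity
  have hNt2nn : 0 ≤ Nt2 := by positivity
  -- RHS nonneg pieces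
  have hcondnn : 0 ≤ condS m n p q :=
    mul_nonneg (specNorm_nonneg _) (specNorm_nonneg _)
  have hRHSnn : 0 ≤ Real.sqrt (2 * (m + n + 1)) * condS m n p q * d := by positivity
  -- squared coefficient distance
  have hd2 : d ^ 2 = (∑ j ∈ Finset.range (m + 1), ‖p.coeff j - pt.coeff j‖ ^ 2)
      + (∑ j ∈ Finset.range (n + 1), ‖q.coeff j - qt.coeff j‖ ^ 2) := by
    rw [hd, coeffDist, Real.sq_sqrt (by positivity)]
    simp [one_mul]
  -- bound on D2
  have hDd : D2 ≤ (m + n + 1) * d ^ 2 := by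
    have h1 : ‖(p - pt).eval z‖ ^ 2
        ≤ (m + 1) * ∑ j ∈ Finset.range (m + 1), ‖(p - pt).coeff j‖ ^ 2 :=
      sq_abs_eval_le (p - pt) m ((natDegree_sub_le p pt).trans (max_le hp hpt)) z hz
    have h2 : ‖(q - qt).eval z‖ ^ 2
        ≤ (n + 1) * ∑ j ∈ Finset.range (n + 1), ‖(q - qt).coeff j‖ ^ 2 :=
      sq_abs_eval_le (q - qt) n ((natDegree_sub_le q qt).trans (max_le hq hqt)) z hz
    simp only [eval_sub, coeff_sub] at h1 h2
    rw [hD2, hd2, hP, hQ, hPt, hQt]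
    have hSp : (0:ℝ) ≤ ∑ j ∈ Finset.range (m + 1), ‖p.coeff j - pt.coeff j‖ ^ 2 :=
      Finset.sum_nonneg fun i _ => by positivity
    have hSq : (0:ℝ) ≤ ∑ j ∈ Finset.range (n + 1), ‖q.coeff j - qt.coeff j‖ ^ 2 :=
      Finset.sum_nonneg fun i _ => by positivity
    push_cast
    nlinarith [h1, h2]
  have hsqD : Real.sqrt D2 ≤ Real.sqrt (m + n + 1) * d := by
    calc Real.sqrt D2 ≤ Real.sqrt ((m + n + 1) * d ^ 2) := Real.sqrt_le_sqrt hDd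
      _ = Real.sqrt (m + n + 1) * d := by
          rw [Real.sqrt_mul (by positivity), Real.sqrt_sq hdnn]
  -- numerator bound
  have hnum : ‖P * Qt - Pt * Q‖ ≤ Real.sqrt D2 * Real.sqrt Nt2 := by
    have e : P * Qt - Pt * Q = (P - Pt) * Qt - Pt * (Q - Qt) := by ring
    have h3 : ‖P * Qt - Pt * Q‖
        ≤ ‖P - Pt‖ * ‖Qt‖ + ‖Pt‖ * ‖Q - Qt‖ := by
      rw [e]
      refine (norm_sub_le _ _).trans ?_
      rw [norm_mul, norm_mul]
    have h4 : (‖P - Pt‖ * ‖Qt‖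
        + ‖Pt‖ * ‖Q - Qt‖) ^ 2 ≤ D2 * Nt2 := by
      rw [hD2, hNt2]
      nlinarith [sq_nonneg (‖P - Pt‖ * ‖Pt‖
        - ‖Q - Qt‖ * ‖Qt‖),
        norm_nonneg (P - Pt), norm_nonneg Qt,
        norm_nonneg Pt, norm_nonneg (Q - Qt)]
    have h5 : ‖P * Qt - Pt * Q‖ ^ 2 ≤ D2 * Nt2 := by
      nlinarith [norm_nonneg (P * Qt - Pt * Q), h3, h4,
        mul_nonneg (norm_nonneg (P - Pt)) (norm_nonneg Qt),
        mul_nonneg (norm_nonneg Pt) (norm_nonneg (Q - Qt))]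
    calc ‖P * Qt - Pt * Q‖ = Real.sqrt (‖P * Qt - Pt * Q‖ ^ 2) :=
          (Real.sqrt_sq (norm_nonneg _)).symm
      _ ≤ Real.sqrt (D2 * Nt2) := Real.sqrt_le_sqrt h5
      _ = Real.sqrt D2 * Real.sqrt Nt2 := Real.sqrt_mul hD2nn _
  -- positivity of N2
  have hN2pos : 0 < N2 := by
    obtain ⟨u, v, huv⟩ := hco
    have he : u.eval z * P + v.eval z * Q = 1 := by
      have := congrArg (Polynomial.eval z) huv
      simpa [hP, hQ] using this
    rcases eq_or_ne P 0 with hP0 | hP0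
    · have hQ0 : Q ≠ 0 := by
        intro h
        rw [hP0, h] at he
        simp at he
      have := norm_pos_iff.mpr hQ0
      rw [hN2]; positivity
    · have := norm_pos_iff.mpr hP0
      rw [hN2]; positivity
  have hsqN2pos : 0 < Real.sqrt N2 := Real.sqrt_pos.mpr hN2pos
  -- chord ≤ √D2 / √N2
  have hchord : chord P Q Pt Qt ≤ Real.sqrt D2 / Real.sqrt N2 := by
    rw [chord, ← hN2, ← hNt2]
    rcases eq_or_lt_of_le (Real.sqrt_nonneg Nt2) with hNt0 | hNtpos
    · rw [← hNt0, mul_zero, div_zero]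
      positivity
    · rw [div_le_div_iff₀ (by positivity) hsqN2pos]
      calc ‖P * Qt - Pt * Q‖ * Real.sqrt N2
          ≤ (Real.sqrt D2 * Real.sqrt Nt2) * Real.sqrt N2 := by
            exact mul_le_mul_of_nonneg_right hnum (Real.sqrt_nonneg _)
        _ = Real.sqrt D2 * (Real.sqrt N2 * Real.sqrt Nt2) := by ring
  -- 1/√N2 ≤ specNorm (pinv S)
  have hpinv := one_le_pinv_norm m n p q hp hq hco hlead z
  rw [← hP, ← hQ, ← hN2] at hpinv
  have hinv : Real.sqrt D2 / Real.sqrt N2 ≤ Real.sqrt D2 * specNorm (pinv (sylv m n p q)) := by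
    rw [div_eq_mul_inv]
    refine mul_le_mul_of_nonneg_left ?_ (Real.sqrt_nonneg _)
    rw [inv_le_iff_one_le_mul₀ hsqN2pos]
    linarith [hpinv]
  have hS2 := one_le_sqrt2_specNorm m n p q hp hq hnorm
  -- final chain
  have hchain : chord P Q Pt Qt ≤ Real.sqrt D2 * specNorm (pinv (sylv m n p q)) :=
    hchord.trans hinv
  calc chord P Q Pt Qt ≤ Real.sqrt D2 * specNorm (pinv (sylv m n p q)) := hchain
    _ ≤ (Real.sqrt (m + n + 1) * d) * specNorm (pinv (sylv m n p q)) := by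
        exact mul_le_mul_of_nonneg_right hsqD (specNorm_nonneg _)
    _ ≤ ((Real.sqrt 2 * specNorm (sylv m n p q)) * (Real.sqrt (m + n + 1) * d))
          * specNorm (pinv (sylv m n p q)) := by
        refine mul_le_mul_of_nonneg_right ?_ (specNorm_nonneg _)
        nlinarith [hS2, mul_nonneg (Real.sqrt_nonneg (m + n + 1 : ℝ)) hdnn]
    _ = (Real.sqrt 2 * Real.sqrt (m + n + 1)) * condS m n p q * d := by
        rw [condS]; ring
    _ = Real.sqrt (2 * (m + n + 1)) * condS m n p q * d := by
        rw [← Real.sqrt_mul (by norm_num : (0:ℝ) ≤ 2)]
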